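/- Let G be a graph (on any vertex set) whose complement contains no clique on 4 vertices (K_4), and suppose the vertex set of G cannot be partitioned into two paths. Then the vertex set of G can be partitioned into three (possibly empty) vertex-disjoint paths. -/

import Mathlib

/-- A maximal-length nodup chain whose elements satisfy `p` exists. -/
lemma exists_max_chain {V : Type*} [Fintype V] (G : SimpleGraph V) (p : V → Prop) :
    ∃ l : List V, l.Chain' G.Adj ∧ l.Nodup ∧ (∀ x ∈ l, p x) ∧
      ∀ m : List V, m.Chain' G.Adj → m.Nodup → (∀ x ∈ m, p x) → m.length ≤ l.length := by
  classical
  set Q : ℕ → Prop := fun n => ∃ l : List V, l.Chain' G.Adj ∧ l.Nodup ∧ (∀ x ∈ l, p x) ∧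
    l.length = n with hQ
  have hQ0 : Q 0 := ⟨[], by simp [List.Chain']⟩
  have hbd : ∀ n, Q n → n ≤ Fintype.card V := by
    rintro n ⟨l, -, hn, -, rfl⟩
    exact hn.length_le_card
  set N := Nat.findGreatest Q (Fintype.card V) with hN
  obtain ⟨l, hc, hn, hp, hlen⟩ : Q N :=
    Nat.findGreatest_spec (Nat.zero_le _) hQ0
  refine ⟨l, hc, hn, hp, fun m hmc hmn hmp => ?_⟩
  have : Q m.length := ⟨m, hmc, hmn, hmp, rfl⟩
  have := Nat.le_findGreatest (hbd _ this) this
  omega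

lemma head_spec {V : Type*} [Fintype V] (G : SimpleGraph V) (p : V → Prop) (l : List V)
    (hc : l.Chain' G.Adj) (hn : l.Nodup) (hp : ∀ x ∈ l, p x)
    (hmax : ∀ m : List V, m.Chain' G.Adj → m.Nodup → (∀ x ∈ m, p x) → m.length ≤ l.length)
    (v : V) (hv : p v) (hvl : v ∉ l) :
    ∃ s ∈ l, ∀ u, p u → u ∉ l → ¬ G.Adj u s := by
  have hlne : l ≠ [] := by
    intro h
    have := hmax [v] (by simp [List.Chain']) (by simp) (by simpa using hv)
    simp [h] at this
  obtain ⟨s, t, rfl⟩ := List.exists_cons_of_ne_nil hlne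
  refine ⟨s, by simp, fun u hu hul hadj => ?_⟩
  have hlen := hmax (u :: s :: t) (List.isChain_cons_cons.mpr ⟨hadj, hc⟩)
    (by simpa [hul] using hn)
    (by
      intro x hx
      rcases List.mem_cons.mp hx with rfl | hx
      · exact hu
      · exact hp x hx)
  simp at hlen

theorem three_paths_of_complement_K4_free {V : Type*} [Fintype V] (G : SimpleGraph V)
    (hK4 : ¬ ∃ a b c d : V, [a, b, c, d].Nodup ∧
      ¬ G.Adj a b ∧ ¬ G.Adj a c ∧ ¬ G.Adj a d ∧ ¬ G.Adj b c ∧ ¬ G.Adj b d ∧ ¬ G.Adj c d)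
    (h2 : ¬ ∃ l1 l2 : List V, l1.Chain' G.Adj ∧ l2.Chain' G.Adj ∧
      (l1 ++ l2).Nodup ∧ ∀ v : V, v ∈ l1 ++ l2) :
    ∃ l1 l2 l3 : List V, l1.Chain' G.Adj ∧ l2.Chain' G.Adj ∧ l3.Chain' G.Adj ∧
      (l1 ++ l2 ++ l3).Nodup ∧ ∀ v : V, v ∈ l1 ++ l2 ++ l3 := by
  classical
  obtain ⟨l1, c1, n1, -, max1⟩ := exists_max_chain G (fun _ => True)
  obtain ⟨l2, c2, n2, p2, max2⟩ := exists_max_chain G (fun x => x ∉ l1)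
  obtain ⟨l3, c3, n3, p3, max3⟩ := exists_max_chain G (fun x => x ∉ l1 ∧ x ∉ l2)
  refine ⟨l1, l2, l3, c1, c2, c3, ?_, ?_⟩
  · simp only [List.nodup_append', List.disjoint_right, List.mem_append]
    refine ⟨⟨n1, n2, fun a ha => p2 a ha⟩, n3, ?_⟩
    intro a ha
    exact not_or.mpr ⟨(p3 a ha).1, (p3 a ha).2⟩
  · intro v
    by_contra hv
    simp only [List.mem_append, not_or] at hv
    obtain ⟨⟨hv1, hv2⟩, hv3⟩ := hv
    obtain ⟨s1, hs1, spec1⟩ := head_spec G _ l1 c1 n1 (fun _ _ => trivial) max1 v trivial hv1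
    obtain ⟨s2, hs2, spec2⟩ := head_spec G _ l2 c2 n2 p2 max2 v hv1 hv2
    obtain ⟨s3, hs3, spec3⟩ := head_spec G _ l3 c3 n3 p3 max3 v ⟨hv1, hv2⟩ hv3
    have h21 : ¬ G.Adj s2 s1 := spec1 s2 trivial (p2 s2 hs2)
    have h31 : ¬ G.Adj s3 s1 := spec1 s3 trivial (p3 s3 hs3).1
    have hv1' : ¬ G.Adj v s1 := spec1 v trivial hv1
    have h32 : ¬ G.Adj s3 s2 := spec2 s3 (p3 s3 hs3).1 (p3 s3 hs3).2
    have hv2' : ¬ G.Adj v s2 := spec2 v hv1 hv2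
    have hv3' : ¬ G.Adj v s3 := spec3 v ⟨hv1, hv2⟩ hv3
    refine hK4 ⟨s1, s2, s3, v, ?_, fun h => h21 h.symm, fun h => h31 h.symm,
      fun h => hv1' h.symm, fun h => h32 h.symm, fun h => hv2' h.symm,
      fun h => hv3' h.symm⟩
    have d12 : s1 ≠ s2 := fun h => p2 s2 hs2 (h ▸ hs1)
    have d13 : s1 ≠ s3 := fun h => (p3 s3 hs3).1 (h ▸ hs1)
    have d23 : s2 ≠ s3 := fun h => (p3 s3 hs3).2 (h ▸ hs2)
    have d1v : s1 ≠ v := fun h => hv1 (h ▸ hs1)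
    have d2v : s2 ≠ v := fun h => hv2 (h ▸ hs2)
    have d3v : s3 ≠ v := fun h => hv3 (h ▸ hs3)
    simp [d12, d13, d23, d1v, d2v, d3v]
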